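/- arXiv:0808.2324 — 3 statements merged into one kernel-verified Lean document; each statement's English description precedes it below -/
import Mathlib

section
/- Let Q > 0 and R > 0 be two positive solutions on [0,∞) of −u'' − (3/r)u' − u + U_u(r) u = 0, u'(0) = 0, with U_u(r) = ∫_0^r K(r,s)u(s)² ds and K(r,s) = 2π²s(1−s²/r²) ≥ 0. If Q(0) > R(0), then Q(r) > R(r) for all r ≥ 0. -/
open MeasureTheory Real Filter Topology

noncomputable section

/-- The kernel `K(r,s) = 2π² s (1 - s²/r²)`. -/
def newtonK (r s : ℝ) : ℝ := 2 * π ^ 2 * s * (1 - s ^ 2 / r ^ 2)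

/-- `U_u(r) = ∫₀ʳ K(r,s) u(s)² ds`. -/
def Upot (u : ℝ → ℝ) (r : ℝ) : ℝ := ∫ s in Set.Ioc (0:ℝ) r, newtonK r s * u s ^ 2

lemma deriv2_stuff (Q : ℝ → ℝ) (hQ : ContDiffOn ℝ 2 Q (Set.Ici 0)) {x : ℝ} (hx : 0 < x) :
    HasDerivAt Q (deriv Q x) x ∧ HasDerivAt (deriv Q) (deriv (deriv Q) x) x := by
  have hmem : Set.Ici (0:ℝ) ∈ 𝓝 x := Ici_mem_nhds hx
  have hca : ContDiffAt ℝ 2 Q x := hQ.contDiffAt hmem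
  obtain ⟨u, hu, hcu⟩ := hca.contDiffOn (le_refl 2) (by simp)
  have hxu : x ∈ interior u := mem_interior_iff_mem_nhds.2 hu
  have h1 : ContDiffOn ℝ 1 (deriv Q) (interior u) :=
    (hcu.mono interior_subset).deriv_of_isOpen isOpen_interior (by norm_num)
  refine ⟨(hca.differentiableAt (by norm_num)).hasDerivAt, ?_⟩
  exact ((h1.differentiableOn (by norm_num)).differentiableAt
      (isOpen_interior.mem_nhds hxu)).hasDerivAt

lemma upot_lt (Q R : ℝ → ℝ) (hQc : ContinuousOn Q (Set.Ici 0)) (hRc : ContinuousOn R (Set.Ici 0))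
    {x : ℝ} (hx : 0 < x) (hlt : ∀ s ∈ Set.Icc (0:ℝ) x, R s < Q s)
    (hRpos : ∀ s ∈ Set.Icc (0:ℝ) x, 0 < R s) :
    Upot R x < Upot Q x := by
  have hKc : Continuous fun s => newtonK x s := by
    unfold newtonK; fun_prop
  have hIQ : IntegrableOn (fun s => newtonK x s * Q s ^ 2) (Set.Ioc 0 x) := by
    refine (IntegrableOn.mono_set ?_ Set.Ioc_subset_Icc_self)
    exact (hKc.continuousOn.mul ((hQc.mono (by
      intro s hs; exact hs.1)).pow 2)).integrableOn_Icc
  have hIR : IntegrableOn (fun s => newtonK x s * R s ^ 2) (Set.Ioc 0 x) := by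
    refine (IntegrableOn.mono_set ?_ Set.Ioc_subset_Icc_self)
    exact (hKc.continuousOn.mul ((hRc.mono (by
      intro s hs; exact hs.1)).pow 2)).integrableOn_Icc
  have hsub : Upot Q x - Upot R x
      = ∫ s in Set.Ioc (0:ℝ) x, (newtonK x s * Q s ^ 2 - newtonK x s * R s ^ 2) :=
    (MeasureTheory.integral_sub hIQ hIR).symm
  have hii : IntervalIntegrable (fun s => newtonK x s * Q s ^ 2 - newtonK x s * R s ^ 2)
      volume 0 x := (intervalIntegrable_iff_integrableOn_Ioc_of_le hx.le).2 (hIQ.sub hIR)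
  have hpos : 0 < ∫ s in (0:ℝ)..x, (newtonK x s * Q s ^ 2 - newtonK x s * R s ^ 2) := by
    refine intervalIntegral.intervalIntegral_pos_of_pos_on hii ?_ hx
    intro s hs
    have hK : 0 < newtonK x s := by
      have h1 : 0 < s := hs.1
      have h2 : s ^ 2 < x ^ 2 := by nlinarith [hs.2]
      have : s ^ 2 / x ^ 2 < 1 := (div_lt_one (by positivity)).2 h2
      have h3 : 0 < 1 - s ^ 2 / x ^ 2 := by linarith
      unfold newtonK
      have hpi := pi_pos
      positivity
    have hR0 : 0 < R s := hRpos s ⟨hs.1.le, hs.2.le⟩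
    have hQR : R s < Q s := hlt s ⟨hs.1.le, hs.2.le⟩
    have hsq : R s ^ 2 < Q s ^ 2 := by nlinarith
    have hmul := mul_lt_mul_of_pos_left hsq hK
    linarith
  rw [intervalIntegral.integral_of_le hx.le] at hpos
  rw [← hsub] at hpos
  linarith


/-- Non-intersection property: two positive solutions of
`-u'' - (3/r)u' - u + U_u(r) u = 0`, `u'(0) = 0`, with `Q(0) > R(0)`
satisfy `Q(r) > R(r)` for all `r ≥ 0`. -/
theorem solutions_never_intersect
    (Q R : ℝ → ℝ)
    (hQC2 : ContDiffOn ℝ 2 Q (Set.Ici 0)) (hRC2 : ContDiffOn ℝ 2 R (Set.Ici 0))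
    (hQpos : ∀ r : ℝ, 0 ≤ r → 0 < Q r) (hRpos : ∀ r : ℝ, 0 ≤ r → 0 < R r)
    (hQ0 : deriv Q 0 = 0) (hR0 : deriv R 0 = 0)
    (hQeq : ∀ r : ℝ, 0 < r →
      -(deriv (deriv Q) r) - (3 / r) * deriv Q r - Q r + Upot Q r * Q r = 0)
    (hReq : ∀ r : ℝ, 0 < r →
      -(deriv (deriv R) r) - (3 / r) * deriv R r - R r + Upot R r * R r = 0)
    (h0 : Q 0 > R 0) :
    ∀ r : ℝ, 0 ≤ r → Q r > R r := by
  by_contra hcon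
  push_neg at hcon
  obtain ⟨r₀, hr₀, hle⟩ := hcon
  set S : Set ℝ := {r | 0 ≤ r ∧ Q r ≤ R r} with hS
  have hSne : S.Nonempty := ⟨r₀, hr₀, hle⟩
  have hSbdd : BddBelow S := ⟨0, fun r hr => hr.1⟩
  have hSclosed : IsClosed S := by
    have : S = Set.Ici (0:ℝ) ∩ (fun r => Q r - R r) ⁻¹' Set.Iic 0 := by
      ext r
      simp only [hS, Set.mem_setOf_eq, Set.mem_inter_iff, Set.mem_Ici, Set.mem_preimage,
        Set.mem_Iic, sub_nonpos]
    rw [this]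
    exact ContinuousOn.preimage_isClosed_of_isClosed
      ((hQC2.continuousOn).sub (hRC2.continuousOn)) isClosed_Ici isClosed_Iic
  set c := sInf S with hcdef
  have hcS : c ∈ S := hSclosed.csInf_mem hSne hSbdd
  have hc0 : 0 < c := by
    rcases lt_or_eq_of_le hcS.1 with h | h
    · exact h
    · exfalso; rw [← h] at hcS; linarith [hcS.2]
  have hbefore : ∀ r : ℝ, 0 ≤ r → r < c → R r < Q r := by
    intro r h1 h2
    by_contra hn
    push_neg at hn
    exact absurd (csInf_le hSbdd ⟨h1, hn⟩) (not_le.2 h2)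
  -- Q c = R c
  have hQRc : Q c = R c := by
    have hQd := (deriv2_stuff Q hQC2 hc0).1
    have hRd := (deriv2_stuff R hRC2 hc0).1
    have hcont : ContinuousAt (fun r => Q r - R r) c :=
      (hQd.differentiableAt.sub hRd.differentiableAt).continuousAt
    have htend : Tendsto (fun r => Q r - R r) (𝓝[<] c) (𝓝 (Q c - R c)) :=
      hcont.continuousWithinAt.tendsto
    have hev : ∀ᶠ r in 𝓝[<] c, 0 ≤ Q r - R r := by
      filter_upwards [Ioo_mem_nhdsLT_of_mem (Set.mem_Ioc.2 ⟨hc0, le_rfl⟩)] with r hr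
      have := hbefore r hr.1.le hr.2
      linarith
    have h1 : 0 ≤ Q c - R c := ge_of_tendsto htend hev
    have h2 := hcS.2
    linarith
  -- the Wronskian-type function
  set W : ℝ → ℝ := fun r => r ^ 3 * (deriv Q r * R r - Q r * deriv R r) with hWdef
  have hWd : ∀ x : ℝ, 0 < x →
      HasDerivAt W (x ^ 3 * (Q x * R x * (Upot Q x - Upot R x))) x := by
    intro x hx
    obtain ⟨hQ1, hQ2⟩ := deriv2_stuff Q hQC2 hx
    obtain ⟨hR1, hR2⟩ := deriv2_stuff R hRC2 hx
    have hpow : HasDerivAt (fun r : ℝ => r ^ 3) (3 * x ^ 2) x := by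
      simpa using hasDerivAt_pow 3 x
    have hinner : HasDerivAt (fun r => deriv Q r * R r - Q r * deriv R r)
        (deriv (deriv Q) x * R x + deriv Q x * deriv R x -
         (deriv Q x * deriv R x + Q x * deriv (deriv R) x)) x := (hQ2.mul hR1).sub (hQ1.mul hR2)
    have hprod := hpow.mul hinner
    refine hprod.congr_deriv ?_
    have e1 := hQeq x hx
    have e2 := hReq x hx
    have hx' : x ≠ 0 := ne_of_gt hx
    have hq2 : deriv (deriv Q) x = -((3 / x) * deriv Q x) - Q x + Upot Q x * Q x := by linarith
    have hr2 : deriv (deriv R) x = -((3 / x) * deriv R x) - R x + Upot R x * R x := by linarith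
    rw [hq2, hr2]
    field_simp
    ring
  have hWderiv_pos : ∀ x : ℝ, 0 < x → x < c → 0 < deriv W x := by
    intro x hx hxc
    rw [(hWd x hx).deriv]
    have hUlt : Upot R x < Upot Q x := by
      refine upot_lt Q R hQC2.continuousOn hRC2.continuousOn hx ?_ ?_
      · intro s hs; exact hbefore s hs.1 (lt_of_le_of_lt hs.2 hxc)
      · intro s hs; exact hRpos s hs.1
    have := hQpos x hx.le
    have := hRpos x hx.le
    have h1 : 0 < Upot Q x - Upot R x := by linarith
    positivity
  -- strict monotonicity of W on subintervals of (0, c]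
  have hmono : ∀ a b : ℝ, 0 < a → b ≤ c → a < b → W a < W b := by
    intro a b ha hbc hab
    have hsm : StrictMonoOn W (Set.Icc a b) := by
      refine strictMonoOn_of_deriv_pos (convex_Icc a b) ?_ ?_
      · intro x hx
        exact ((hWd x (lt_of_lt_of_le ha hx.1)).differentiableAt.continuousAt).continuousWithinAt
      · intro x hx
        rw [interior_Icc] at hx
        exact hWderiv_pos x (lt_trans ha hx.1) (lt_of_lt_of_le hx.2 hbc)
    exact hsm ⟨le_rfl, hab.le⟩ ⟨hab.le, le_rfl⟩ hab
  -- W tends to 0 at 0⁺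
  have hW0 : Tendsto W (𝓝[>] (0:ℝ)) (𝓝 0) := by
    set dQ := derivWithin Q (Set.Ici 0) with hdQ
    set dR := derivWithin R (Set.Ici 0) with hdR
    have hQdc : ContinuousOn dQ (Set.Ici 0) :=
      hQC2.continuousOn_derivWithin (uniqueDiffOn_Ici 0) (by norm_num)
    have hRdc : ContinuousOn dR (Set.Ici 0) :=
      hRC2.continuousOn_derivWithin (uniqueDiffOn_Ici 0) (by norm_num)
    have hsub : 𝓝[>] (0:ℝ)≤ 𝓝[Set.Ici 0] (0:ℝ) :=
      nhdsWithin_mono 0 Set.Ioi_subset_Ici_self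
    have tQ' : Tendsto dQ (𝓝[>] (0:ℝ)) (𝓝 (dQ 0)) :=
      ((hQdc 0 Set.self_mem_Ici).tendsto).mono_left hsub
    have tR' : Tendsto dR (𝓝[>] (0:ℝ)) (𝓝 (dR 0)) :=
      ((hRdc 0 Set.self_mem_Ici).tendsto).mono_left hsub
    have heQ : deriv Q =ᶠ[𝓝[>] (0:ℝ)] dQ := by
      filter_upwards [self_mem_nhdsWithin] with x hx
      exact (derivWithin_of_mem_nhds (Ici_mem_nhds hx)).symm
    have heR : deriv R =ᶠ[𝓝[>] (0:ℝ)] dR := by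
      filter_upwards [self_mem_nhdsWithin] with x hx
      exact (derivWithin_of_mem_nhds (Ici_mem_nhds hx)).symm
    have tQd : Tendsto (deriv Q) (𝓝[>] (0:ℝ)) (𝓝 (dQ 0)) := tQ'.congr' heQ.symm
    have tRd : Tendsto (deriv R) (𝓝[>] (0:ℝ)) (𝓝 (dR 0)) := tR'.congr' heR.symm
    have tQ : Tendsto Q (𝓝[>] (0:ℝ)) (𝓝 (Q 0)) :=
      ((hQC2.continuousOn 0 Set.self_mem_Ici).tendsto).mono_left hsub
    have tR : Tendsto R (𝓝[>] (0:ℝ)) (𝓝 (R 0)) :=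
      ((hRC2.continuousOn 0 Set.self_mem_Ici).tendsto).mono_left hsub
    have tpow : Tendsto (fun r : ℝ => r ^ 3) (𝓝[>] (0:ℝ)) (𝓝 ((0:ℝ) ^ 3)) :=
      ((continuous_pow 3).tendsto 0).mono_left nhdsWithin_le_nhds
    have := tpow.mul ((tQd.mul tR).sub (tQ.mul tRd))
    simpa using this
  -- W (c/2) ≥ 0
  have hWhalf : 0 ≤ W (c / 2) := by
    have hev : ∀ᶠ a in 𝓝[>] (0:ℝ), W a ≤ W (c / 2) := by
      filter_upwards [Ioo_mem_nhdsGT_of_mem (Set.mem_Ico.2 ⟨le_rfl, half_pos hc0⟩)] with a ha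
      exact (hmono a (c / 2) ha.1 (by linarith) ha.2).le
    exact le_of_tendsto hW0 hev
  have hWc : 0 < W c := lt_of_le_of_lt hWhalf (hmono (c / 2) c (half_pos hc0) le_rfl (half_lt_self hc0))
  -- on the other hand W c ≤ 0
  have hQ1 := (deriv2_stuff Q hQC2 hc0).1
  have hR1 := (deriv2_stuff R hRC2 hc0).1
  have hfd : HasDerivAt (fun r => Q r - R r) (deriv Q c - deriv R c) c := hQ1.sub hR1
  have hslope : Tendsto (slope (fun r => Q r - R r) c) (𝓝[<] c)
      (𝓝 (deriv Q c - deriv R c)) := by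
    have := hasDerivAt_iff_tendsto_slope.1 hfd
    exact this.mono_left (nhdsWithin_mono c fun x hx => ne_of_lt hx)
  have hev : ∀ᶠ y in 𝓝[<] c, slope (fun r => Q r - R r) c y ≤ 0 := by
    filter_upwards [Ioo_mem_nhdsLT_of_mem (Set.mem_Ioc.2 ⟨hc0, le_rfl⟩)] with y hy
    rw [slope_def_field]
    have h1 : 0 < Q y - R y := sub_pos.2 (hbefore y hy.1.le hy.2)
    have h2 : y - c < 0 := sub_neg.2 hy.2
    have h3 : Q c - R c = 0 := by rw [hQRc]; ring
    rw [h3, sub_zero]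
    exact (div_neg_of_pos_of_neg h1 h2).le
  have hd_le : deriv Q c - deriv R c ≤ 0 := le_of_tendsto hslope hev
  have hWc_le : W c ≤ 0 := by
    have hRc := hRpos c hc0.le
    have hc3 : 0 < c ^ 3 := by positivity
    have : W c = c ^ 3 * R c * (deriv Q c - deriv R c) := by
      simp only [hWdef, hQRc]; ring
    rw [this]
    have := mul_pos hc3 hRc
    exact mul_nonpos_of_nonneg_of_nonpos this.le hd_le
  linarith


end
end

section
/- Let H_Q = −Δ + U_Q and H_R = −Δ + U_R be Schrödinger operators on L²(ℝ⁴) with continuous potentials satisfying U_Q(x) > U_R(x) for all x ≠ 0. Suppose Q > 0 and R > 0 are normalized eigenfunctions with H_Q Q = Q and H_R R = R, and both operators satisfy ⟨φ, H φ⟩ ≥ ‖φ‖²_{L²} for all φ ∈ H¹(ℝ⁴). Then a contradiction arises: ‖Q‖²_{L²} ≤ ⟨Q, H_R Q⟩ = ‖Q‖²_{L²} − ⟨Q, (U_Q − U_R)Q⟩ < ‖Q‖²_{L²}. -/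
open MeasureTheory

open Set
open scoped RealInnerProductSpace

noncomputable section

abbrev E4 := EuclideanSpace ℝ (Fin 4)

/-- The Laplacian of a function `f : ℝ⁴ → ℝ`. -/
def lapR (f : E4 → ℝ) (x : E4) : ℝ :=
  ∑ i : Fin 4, fderiv ℝ (fun y => fderiv ℝ f y (EuclideanSpace.single i 1)) x
      (EuclideanSpace.single i 1)

lemma div_int_zero_pi (f : Fin 4 → (Fin 4 → ℝ) → ℝ) (hf : ∀ i, ContDiff ℝ 1 (f i))
    (hsupp : ∀ i, HasCompactSupport (f i)) :
    ∫ x : Fin 4 → ℝ, ∑ i, fderiv ℝ (f i) x (Pi.single i 1) = 0 := by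
  obtain ⟨r, hr0, hr⟩ : ∃ r : ℝ, 0 < r ∧ ∀ i, tsupport (f i) ⊆ Metric.closedBall 0 r := by
    have : ∀ i, ∃ r, tsupport (f i) ⊆ Metric.closedBall 0 r := fun i =>
      (hsupp i).isBounded.subset_closedBall 0
    choose r hr using this
    refine ⟨max (⨆ i, r i) 1, lt_of_lt_of_le one_pos (le_max_right _ _), fun i => (hr i).trans ?_⟩
    exact Metric.closedBall_subset_closedBall
      ((le_ciSup (Set.finite_range r).bddAbove i).trans (le_max_left _ _))
  have hnb : ∀ i (x : Fin 4 → ℝ), r < ‖x‖ → f i x = 0 := by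
    intro i x hx
    refine image_eq_zero_of_notMem_tsupport fun h => ?_
    have := hr i h
    rw [Metric.mem_closedBall, dist_zero_right] at this
    linarith
  have hfz : ∀ i (x : Fin 4 → ℝ), r < ‖x‖ → fderiv ℝ (f i) x = 0 := by
    intro i x hx
    have hev : f i =ᶠ[nhds x] (fun _ => (0:ℝ)) := by
      have hop : IsOpen {y : Fin 4 → ℝ | r < ‖y‖} := isOpen_lt continuous_const continuous_norm
      filter_upwards [hop.mem_nhds hx] with y hy
      exact hnb i y hy
    rw [hev.fderiv_eq]
    exact fderiv_const_apply 0
  set a : Fin 4 → ℝ := fun _ => -(r + 1) with ha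
  set b : Fin 4 → ℝ := fun _ => (r + 1) with hb
  have hle : a ≤ b := fun i => by simp only [ha, hb]; linarith
  have hdiv_cont : Continuous (fun x => ∑ i, fderiv ℝ (f i) x (Pi.single i 1)) := by
    refine continuous_finset_sum _ fun i _ => ?_
    exact (isBoundedBilinearMap_apply.continuous.comp
      (((hf i).continuous_fderiv one_ne_zero).prodMk continuous_const))
  have hdiv_supp : ∀ x : Fin 4 → ℝ, r < ‖x‖ →
      (∑ i, fderiv ℝ (f i) x (Pi.single i 1)) = 0 := by
    intro x hx
    refine Finset.sum_eq_zero fun i _ => ?_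
    rw [hfz i x hx]; rfl
  have key := integral_divergence_of_hasFDerivAt_off_countable a b hle
    (fun x i => f i x) (fun x => ContinuousLinearMap.pi fun i => fderiv ℝ (f i) x)
    ∅ countable_empty ?_ ?_ ?_
  · have hfaces : ∀ (i : Fin 4) (c : ℝ), r < |c| →
        ∀ x : (∀ j : Fin 3, (fun _ : Fin 4 => ℝ) (i.succAbove j)),
        f i (i.insertNth c x) = 0 := by
      intro i c hc x
      refine hnb i _ (lt_of_lt_of_le hc ?_)
      have := norm_le_pi_norm (show Fin 4 → ℝ from i.insertNth c x) i
      simpa using this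
    have hfaces0 : ∑ i : Fin (3+1),
        ((∫ x in Icc (a ∘ i.succAbove) (b ∘ i.succAbove),
          (fun x i => f i x) (i.insertNth (b i) x) i) -
        ∫ x in Icc (a ∘ i.succAbove) (b ∘ i.succAbove),
          (fun x i => f i x) (i.insertNth (a i) x) i) = 0 := by
      refine Finset.sum_eq_zero fun i _ => ?_
      have h1 : ∀ x, f i (i.insertNth (b i) x) = 0 := by
        intro x
        refine hfaces i _ ?_ x
        have hbi : b i = r + 1 := rfl
        rw [hbi, abs_of_pos (by linarith)]; linarith
      have h2 : ∀ x, f i (i.insertNth (a i) x) = 0 := by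
        intro x
        refine hfaces i _ ?_ x
        have hai : a i = -(r + 1) := rfl
        rw [hai, abs_neg, abs_of_pos (by linarith)]; linarith
      simp only [h1, h2]
      simp
    have hset : ∫ x in Icc a b, (∑ i, fderiv ℝ (f i) x (Pi.single i 1)) =
        ∫ x : Fin 4 → ℝ, ∑ i, fderiv ℝ (f i) x (Pi.single i 1) := by
      refine setIntegral_eq_integral_of_forall_compl_eq_zero fun x hx => ?_
      refine hdiv_supp x ?_
      rw [Set.mem_Icc, not_and_or] at hx
      have hj : ∃ j, r + 1 < |x j| := by
        rcases hx with h | h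
        · rw [Pi.le_def] at h; push_neg at h
          obtain ⟨j, hj⟩ := h
          refine ⟨j, lt_of_lt_of_le ?_ (neg_le_abs _)⟩
          simp only [ha] at hj; linarith
        · rw [Pi.le_def] at h; push_neg at h
          obtain ⟨j, hj⟩ := h
          refine ⟨j, lt_of_lt_of_le ?_ (le_abs_self _)⟩
          simp only [hb] at hj; linarith
      obtain ⟨j, hj⟩ := hj
      have := norm_le_pi_norm x j
      simp only [Real.norm_eq_abs] at this
      linarith
    rw [← hset]
    rw [hfaces0] at key
    exact key
  · exact continuousOn_pi.2 fun i => ((hf i).continuous).continuousOn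
  · intro x _
    exact hasFDerivAt_pi.2 fun i => ((hf i).differentiable one_ne_zero x).hasFDerivAt
  · refine (hdiv_cont.integrable_of_hasCompactSupport ?_).integrableOn
    refine HasCompactSupport.intro (isCompact_closedBall 0 r) fun x hx => ?_
    refine hdiv_supp x ?_
    rw [Metric.mem_closedBall, dist_zero_right, not_le] at hx
    exact hx


lemma div_int_zero (g : Fin 4 → E4 → ℝ) (hg : ∀ i, ContDiff ℝ 1 (g i))
    (hsupp : ∀ i, HasCompactSupport (g i)) :
    ∫ x : E4, ∑ i, fderiv ℝ (g i) x (EuclideanSpace.single i 1) = 0 := by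
  set L : (Fin 4 → ℝ) ≃L[ℝ] E4 := (EuclideanSpace.equiv (Fin 4) ℝ).symm with hL
  have hvol : MeasurePreserving (MeasurableEquiv.toLp 2 (Fin 4 → ℝ))
      (volume : Measure (Fin 4 → ℝ)) (volume : Measure E4) :=
    (EuclideanSpace.volume_preserving_symm_measurableEquiv_toLp (Fin 4)).symm
  have htrans : ∫ x : E4, ∑ i, fderiv ℝ (g i) x (EuclideanSpace.single i 1) =
      ∫ y : Fin 4 → ℝ, ∑ i, fderiv ℝ (g i) (L y) (EuclideanSpace.single i 1) := by
    rw [← hvol.integral_comp (MeasurableEquiv.toLp 2 (Fin 4 → ℝ)).measurableEmbedding]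
    rfl
  rw [htrans]
  have hfd : ∀ i (y : Fin 4 → ℝ),
      fderiv ℝ (fun z => g i (L z)) y (Pi.single i 1) =
      fderiv ℝ (g i) (L y) (EuclideanSpace.single i 1) := by
    intro i y
    rw [show (fun z => g i (L z)) = (g i) ∘ L from rfl, L.comp_right_fderiv]
    rfl
  rw [show (fun y : Fin 4 → ℝ => ∑ i, fderiv ℝ (g i) (L y) (EuclideanSpace.single i 1))
      = fun y => ∑ i, fderiv ℝ (fun z => g i (L z)) y (Pi.single i 1) from
      funext fun y => Finset.sum_congr rfl fun i _ => (hfd i y).symm]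
  exact div_int_zero_pi _ (fun i => (hg i).comp L.contDiff)
    (fun i => (hsupp i).comp_homeomorph L.toHomeomorph)

lemma norm_fderiv_sq (ℓ : E4 →L[ℝ] ℝ) :
    ‖ℓ‖ ^ 2 = ∑ i : Fin 4, (ℓ (EuclideanSpace.single i 1)) ^ 2 := by
  set v : E4 := (InnerProductSpace.toDual ℝ E4).symm ℓ with hv
  have hℓ : ∀ w, ℓ w = ⟪v, w⟫ := fun w => (InnerProductSpace.toDual_symm_apply).symm
  have hnorm : ‖ℓ‖ = ‖v‖ := ((InnerProductSpace.toDual ℝ E4).symm.norm_map ℓ).symm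
  rw [hnorm]
  have : ∀ i, ℓ (EuclideanSpace.single i 1) = v i := by
    intro i
    rw [hℓ]
    simp [real_inner_comm, EuclideanSpace.inner_single_left]
  simp only [this]
  rw [EuclideanSpace.norm_eq]
  rw [Real.sq_sqrt (by positivity)]
  congr 1
  ext i
  rw [Real.norm_eq_abs, sq_abs]

lemma ibp_eq (Q : E4 → ℝ) (hQsm : ContDiff ℝ 2 Q)
    (hgrad : Integrable (fun x : E4 =>
      ∑ i : Fin 4, (fderiv ℝ Q x (EuclideanSpace.single i 1)) ^ 2))
    (hmix : Integrable (fun x : E4 =>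
      ∑ i : Fin 4, |Q x * fderiv ℝ Q x (EuclideanSpace.single i 1)|))
    (hQlap : Integrable (fun x : E4 => Q x * lapR Q x)) :
    (∫ x : E4, ∑ i : Fin 4, (fderiv ℝ Q x (EuclideanSpace.single i 1)) ^ 2)
      + ∫ x : E4, Q x * lapR Q x = 0 := by
  classical
  set e : Fin 4 → E4 := fun i => EuclideanSpace.single i 1 with he
  -- bump function
  set ψ : ContDiffBump (0 : E4) := ⟨1, 2, one_pos, one_lt_two⟩ with hψ
  have hψc1 : ContDiff ℝ 1 (⇑ψ) := ψ.contDiff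
  have hψfc : Continuous (fun x => fderiv ℝ (⇑ψ) x) := hψc1.continuous_fderiv one_ne_zero
  obtain ⟨M, hM⟩ := (ψ.hasCompactSupport.fderiv (𝕜 := ℝ)).exists_bound_of_continuous hψfc
  have hM0 : 0 ≤ M := le_trans (norm_nonneg _) (hM 0)
  -- scaled cutoffs
  set c : ℕ → ℝ := fun n => ((n : ℝ) + 1)⁻¹ with hcdef
  have hc0 : ∀ n, 0 < c n := fun n => by positivity
  have hc1 : ∀ n, c n ≤ 1 := fun n => by
    rw [hcdef]
    rw [inv_le_one_iff₀]
    right; push_cast; linarith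
  set φ : ℕ → E4 → ℝ := fun n x => ψ ((c n) • x) with hφdef
  have hφsm : ∀ n, ContDiff ℝ 1 (φ n) := fun n =>
    hψc1.comp (contDiff_id.const_smul (c n))
  have hφfd : ∀ n x, HasFDerivAt (φ n)
      ((fderiv ℝ (⇑ψ) ((c n) • x)).comp ((c n) • ContinuousLinearMap.id ℝ E4)) x := by
    intro n x
    have h1 : HasFDerivAt (fun y : E4 => (c n) • y)
        ((c n) • ContinuousLinearMap.id ℝ E4) x :=
      ((c n) • ContinuousLinearMap.id ℝ E4).hasFDerivAt
    have h2 : HasFDerivAt (⇑ψ) (fderiv ℝ (⇑ψ) ((c n) • x)) ((c n) • x) :=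
      ((hψc1.differentiable one_ne_zero) _).hasFDerivAt
    exact h2.comp x h1
  have hφderiv : ∀ n x w, fderiv ℝ (φ n) x w = c n * fderiv ℝ (⇑ψ) ((c n) • x) w := by
    intro n x w
    rw [(hφfd n x).fderiv]
    simp [ContinuousLinearMap.smul_apply, smul_eq_mul, mul_comm]
  have hφbound : ∀ n x i, |fderiv ℝ (φ n) x (e i)| ≤ c n * M := by
    intro n x i
    rw [hφderiv]
    rw [abs_mul, abs_of_pos (hc0 n)]
    refine mul_le_mul_of_nonneg_left ?_ (le_of_lt (hc0 n))
    calc |fderiv ℝ (⇑ψ) ((c n) • x) (e i)| ≤ ‖fderiv ℝ (⇑ψ) ((c n) • x)‖ * ‖e i‖ :=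
          (fderiv ℝ (⇑ψ) ((c n) • x)).le_opNorm (e i)
      _ ≤ M * 1 := by
          refine mul_le_mul (hM _) ?_ (norm_nonneg _) hM0
          rw [he]
          simp [EuclideanSpace.norm_single]
      _ = M := mul_one M
  have hφone : ∀ (n : ℕ) x, ‖x‖ ≤ (n : ℝ) + 1 → φ n x = 1 := by
    intro n x hx
    refine ψ.one_of_mem_closedBall ?_
    rw [Metric.mem_closedBall, dist_zero_right, norm_smul, Real.norm_eq_abs,
      abs_of_pos (hc0 n)]
    have : c n * ‖x‖ ≤ c n * ((n : ℝ) + 1) :=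
      mul_le_mul_of_nonneg_left hx (le_of_lt (hc0 n))
    have h2 : c n * ((n : ℝ) + 1) = 1 := by
      rw [hcdef]; field_simp
    show c n * ‖x‖ ≤ ψ.rIn
    have h3 : ψ.rIn = 1 := rfl
    rw [h3]
    linarith
  have hφabs : ∀ n x, |φ n x| ≤ 1 := fun n x => by
    rw [abs_of_nonneg (ψ.nonneg)]
    exact ψ.le_one
  have hφsupp : ∀ n, HasCompactSupport (φ n) := fun n =>
    ψ.hasCompactSupport.comp_homeomorph (Homeomorph.smulOfNeZero (c n) (hc0 n).ne')
  -- first derivatives of Q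
  set D : Fin 4 → E4 → ℝ := fun i x => fderiv ℝ Q x (e i) with hD
  have hDsm : ∀ i, ContDiff ℝ 1 (D i) := by
    intro i
    exact (hQsm.fderiv_right (m := 1) (by norm_num)).clm_apply contDiff_const
  have hQd : Differentiable ℝ Q := hQsm.differentiable two_ne_zero
  -- the vector field
  set g : ℕ → Fin 4 → E4 → ℝ := fun n i x => φ n x * (Q x * D i x) with hg
  have hgsm : ∀ n i, ContDiff ℝ 1 (g n i) := fun n i =>
    (hφsm n).mul ((hQsm.of_le one_le_two).mul (hDsm i))
  have hgsupp : ∀ n i, HasCompactSupport (g n i) := fun n i =>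
    (hφsupp n).mul_right
  set W : E4 → ℝ := fun x => (∑ i, (D i x) ^ 2) + Q x * lapR Q x with hW
  set T : ℕ → E4 → ℝ := fun n x => ∑ i, fderiv ℝ (φ n) x (e i) * (Q x * D i x) with hT
  have hdivpt : ∀ n x, (∑ i, fderiv ℝ (g n i) x (e i)) = T n x + φ n x * W x := by
    intro n x
    have hsum : ∀ i, fderiv ℝ (g n i) x (e i) =
        fderiv ℝ (φ n) x (e i) * (Q x * D i x)
          + φ n x * ((D i x) ^ 2 + Q x * fderiv ℝ (D i) x (e i)) := by
      intro i
      have hφdiff : DifferentiableAt ℝ (φ n) x := ((hφsm n).differentiable one_ne_zero) x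
      have hDdiff : DifferentiableAt ℝ (D i) x := ((hDsm i).differentiable one_ne_zero) x
      have hQDdiff : DifferentiableAt ℝ (fun y => Q y * D i y) x := (hQd x).mul hDdiff
      have e1 : fderiv ℝ (g n i) x = φ n x • fderiv ℝ (fun y => Q y * D i y) x
          + (Q x * D i x) • fderiv ℝ (φ n) x := fderiv_mul hφdiff hQDdiff
      have e2 : fderiv ℝ (fun y => Q y * D i y) x =
          Q x • fderiv ℝ (D i) x + D i x • fderiv ℝ Q x := fderiv_mul (hQd x) hDdiff
      have : fderiv ℝ (g n i) x (e i) =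
          φ n x * (Q x * fderiv ℝ (D i) x (e i) + D i x * fderiv ℝ Q x (e i))
            + Q x * D i x * fderiv ℝ (φ n) x (e i) := by
        rw [e1]
        simp only [e2, ContinuousLinearMap.add_apply, ContinuousLinearMap.smul_apply,
          smul_eq_mul]
      rw [this]
      have hDval : fderiv ℝ Q x (e i) = D i x := rfl
      rw [hDval]
      ring
    rw [Finset.sum_congr rfl fun i _ => hsum i, Finset.sum_add_distrib]
    have hWx : φ n x * W x = ∑ i, φ n x * ((D i x) ^ 2 + Q x * fderiv ℝ (D i) x (e i)) := by
      have h0 : W x = (∑ i, (D i x) ^ 2) + Q x * ∑ i, fderiv ℝ (D i) x (e i) := rfl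
      have h1 : W x = ∑ i, ((D i x) ^ 2 + Q x * fderiv ℝ (D i) x (e i)) := by
        rw [h0, Finset.mul_sum, ← Finset.sum_add_distrib]
      rw [h1, Finset.mul_sum]
    rw [hWx]
  -- continuity facts
  have hDcont : ∀ i, Continuous (D i) := fun i => (hDsm i).continuous
  have hQcont : Continuous Q := hQsm.continuous
  have hfder2cont : ∀ i, Continuous (fun x => fderiv ℝ (D i) x) := fun i =>
    (hDsm i).continuous_fderiv one_ne_zero
  have hWcont : Continuous W := by
    refine Continuous.add (continuous_finset_sum _ fun i _ => (hDcont i).pow 2) ?_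
    refine hQcont.mul ?_
    show Continuous fun x => lapR Q x
    refine continuous_finset_sum _ fun i _ => ?_
    exact isBoundedBilinearMap_apply.continuous.comp
      ((((hQsm.fderiv_right (m := 1) (by norm_num)).clm_apply
        contDiff_const).continuous_fderiv one_ne_zero).prodMk continuous_const)
  have hTcont : ∀ n, Continuous (T n) := by
    intro n
    refine continuous_finset_sum _ fun i _ => Continuous.mul ?_ (hQcont.mul (hDcont i))
    exact isBoundedBilinearMap_apply.continuous.comp
      (((hφsm n).continuous_fderiv one_ne_zero).prodMk continuous_const)
  set S : E4 → ℝ := fun x => ∑ i, |Q x * D i x| with hS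
  have hSint : Integrable S := hmix
  have hSnonneg : ∀ x, 0 ≤ S x := fun x =>
    Finset.sum_nonneg fun i _ => abs_nonneg _
  have hTbound : ∀ n x, ‖T n x‖ ≤ c n * M * S x := by
    intro n x
    rw [Real.norm_eq_abs]
    calc |T n x| ≤ ∑ i, |fderiv ℝ (φ n) x (e i) * (Q x * D i x)| :=
          Finset.abs_sum_le_sum_abs _ _
      _ ≤ ∑ i, c n * M * |Q x * D i x| := by
          refine Finset.sum_le_sum fun i _ => ?_
          rw [abs_mul]
          exact mul_le_mul_of_nonneg_right (hφbound n x i) (abs_nonneg _)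
      _ = c n * M * S x := by rw [hS, Finset.mul_sum]
  have hWint : Integrable W := hgrad.add hQlap
  have hTint : ∀ n, Integrable (T n) := by
    intro n
    refine Integrable.mono' (hSint.const_mul (c n * M)) (hTcont n).aestronglyMeasurable ?_
    exact ae_of_all _ fun x => hTbound n x
  have hφWint : ∀ n, Integrable (fun x => φ n x * W x) := by
    intro n
    refine Integrable.mono' hWint.abs ((hφsm n).continuous.mul hWcont).aestronglyMeasurable ?_
    refine ae_of_all _ fun x => ?_
    rw [Real.norm_eq_abs, abs_mul]
    calc |φ n x| * |W x| ≤ 1 * |W x| :=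
          mul_le_mul_of_nonneg_right (hφabs n x) (abs_nonneg _)
      _ = |W x| := one_mul _
  have hzero : ∀ n, (∫ x, T n x) + (∫ x, φ n x * W x) = 0 := by
    intro n
    have h0 := div_int_zero (g n) (hgsm n) (hgsupp n)
    have h1 : (fun x => ∑ i, fderiv ℝ (g n i) x (EuclideanSpace.single i 1)) =
        fun x => T n x + φ n x * W x := funext fun x => hdivpt n x
    rw [h1] at h0
    rw [← integral_add (hTint n) (hφWint n)]
    exact h0
  have hlim1 : Filter.Tendsto (fun n => ∫ x, φ n x * W x) Filter.atTop
      (nhds (∫ x, W x)) := by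
    refine tendsto_integral_of_dominated_convergence (fun x => |W x|)
      (fun n => ((hφsm n).continuous.mul hWcont).aestronglyMeasurable) hWint.abs
      (fun n => ae_of_all _ fun x => ?_) (ae_of_all _ fun x => ?_)
    · rw [Real.norm_eq_abs, abs_mul]
      calc |φ n x| * |W x| ≤ 1 * |W x| :=
            mul_le_mul_of_nonneg_right (hφabs n x) (abs_nonneg _)
        _ = |W x| := one_mul _
    · refine Filter.Tendsto.congr' ?_ tendsto_const_nhds
      filter_upwards [Filter.eventually_ge_atTop ⌈‖x‖⌉₊] with n hn
      have h1 : ‖x‖ ≤ (n : ℝ) := le_trans (Nat.le_ceil _) (Nat.cast_le.2 hn)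
      rw [hφone n x (by linarith), one_mul]
  have hlim2 : Filter.Tendsto (fun n => ∫ x, T n x) Filter.atTop (nhds 0) := by
    have h0 : Filter.Tendsto (fun n => ∫ x, T n x) Filter.atTop
        (nhds (∫ _ : E4, (0:ℝ))) := by
      refine tendsto_integral_of_dominated_convergence (fun x => M * S x)
        (fun n => (hTcont n).aestronglyMeasurable) (hSint.const_mul M)
        (fun n => ae_of_all _ fun x => ?_) (ae_of_all _ fun x => ?_)
      · calc ‖T n x‖ ≤ c n * M * S x := hTbound n x
          _ ≤ 1 * M * S x := by
              refine mul_le_mul_of_nonneg_right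
                (mul_le_mul_of_nonneg_right (hc1 n) hM0) (hSnonneg x)
          _ = M * S x := by ring
      · refine squeeze_zero_norm (fun n => hTbound n x) ?_
        have hc : Filter.Tendsto c Filter.atTop (nhds 0) := by
          have := tendsto_one_div_add_atTop_nhds_zero_nat (𝕜 := ℝ)
          simpa [hcdef, one_div] using this
        have := (hc.mul_const M).mul_const (S x)
        simpa using this
    rw [integral_zero] at h0
    exact h0
  have hcomb := hlim2.add hlim1
  rw [zero_add] at hcomb
  have h2 : (fun n => (∫ x, T n x) + ∫ x, φ n x * W x) = fun _ : ℕ => (0:ℝ) :=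
    funext hzero
  rw [h2] at hcomb
  have hWzero : (0:ℝ) = ∫ x, W x := tendsto_nhds_unique tendsto_const_nhds hcomb
  rw [← integral_add hgrad hQlap]
  exact hWzero.symm

/-- Two Schrödinger operators `H_Q = -Δ + U_Q`, `H_R = -Δ + U_R` on `L²(ℝ⁴)` with
strictly ordered potentials cannot both possess positive normalized eigenfunctions
with eigenvalue `1` lying at the bottom of the quadratic form: a contradiction arises. -/
theorem ordered_potentials_contradiction
    (UQ UR : E4 → ℝ) (hUQc : Continuous UQ) (hURc : Continuous UR)
    (hord : ∀ x : E4, x ≠ 0 → UQ x > UR x)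
    (Q R : E4 → ℝ)
    (hQsm : ContDiff ℝ 2 Q) (hRsm : ContDiff ℝ 2 R)
    (hQpos : ∀ x : E4, 0 < Q x) (hRpos : ∀ x : E4, 0 < R x)
    (hQL2 : MemLp Q 2 (volume : Measure E4))
    (hRL2 : MemLp R 2 (volume : Measure E4))
    (hQH1 : MemLp (fun x => fderiv ℝ Q x) 2 (volume : Measure E4))
    (hRH1 : MemLp (fun x => fderiv ℝ R x) 2 (volume : Measure E4))
    (hQnorm : (∫ x : E4, (Q x) ^ 2) = 1)
    (hRnorm : (∫ x : E4, (R x) ^ 2) = 1)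
    (hQeig : ∀ x : E4, -lapR Q x + UQ x * Q x = Q x)
    (hReig : ∀ x : E4, -lapR R x + UR x * R x = R x)
    (hQIntU : Integrable (fun x : E4 => UQ x * (Q x) ^ 2))
    (hRIntUQ : Integrable (fun x : E4 => UR x * (Q x) ^ 2))
    (hQform : ∀ φ : E4 → ℝ, Differentiable ℝ φ →
      MemLp φ 2 (volume : Measure E4) →
      MemLp (fun x => fderiv ℝ φ x) 2 (volume : Measure E4) →
      Integrable (fun x : E4 => UQ x * (φ x) ^ 2) →
      (∫ x : E4, ‖fderiv ℝ φ x‖ ^ 2) + (∫ x : E4, UQ x * (φ x) ^ 2)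
        ≥ ∫ x : E4, (φ x) ^ 2)
    (hRform : ∀ φ : E4 → ℝ, Differentiable ℝ φ →
      MemLp φ 2 (volume : Measure E4) →
      MemLp (fun x => fderiv ℝ φ x) 2 (volume : Measure E4) →
      Integrable (fun x : E4 => UR x * (φ x) ^ 2) →
      (∫ x : E4, ‖fderiv ℝ φ x‖ ^ 2) + (∫ x : E4, UR x * (φ x) ^ 2)
        ≥ ∫ x : E4, (φ x) ^ 2) :
    False := by
  have hQd : Differentiable ℝ Q := hQsm.differentiable two_ne_zero
  have hQsq : Integrable (fun x : E4 => Q x ^ 2) := hQL2.integrable_sq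
  have hlap_eq : ∀ x, lapR Q x = UQ x * Q x - Q x := fun x => by
    have := hQeig x; linarith
  have hQlapInt : Integrable (fun x : E4 => Q x * lapR Q x) := by
    have heq : (fun x : E4 => Q x * lapR Q x)
        = fun x => UQ x * Q x ^ 2 - Q x ^ 2 := funext fun x => by
      rw [hlap_eq x]; ring
    rw [heq]
    exact hQIntU.sub hQsq
  have hDcont : ∀ i : Fin 4, Continuous (fun x : E4 =>
      fderiv ℝ Q x (EuclideanSpace.single i 1)) := fun i =>
    ((hQsm.fderiv_right (m := 1) (by norm_num)).clm_apply contDiff_const).continuous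
  have hDi : ∀ i : Fin 4, MemLp (fun x : E4 =>
      fderiv ℝ Q x (EuclideanSpace.single i 1)) 2 (volume : Measure E4) := by
    intro i
    refine hQH1.of_le (hDcont i).aestronglyMeasurable (ae_of_all _ fun x => ?_)
    calc ‖fderiv ℝ Q x (EuclideanSpace.single i 1)‖
        ≤ ‖fderiv ℝ Q x‖ * ‖EuclideanSpace.single i (1:ℝ)‖ := (fderiv ℝ Q x).le_opNorm _
      _ = ‖fderiv ℝ Q x‖ := by simp [EuclideanSpace.norm_single]
  have hgrad : Integrable (fun x : E4 =>
      ∑ i : Fin 4, (fderiv ℝ Q x (EuclideanSpace.single i 1)) ^ 2) :=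
    integrable_finset_sum _ fun i _ => (hDi i).integrable_sq
  have hmix : Integrable (fun x : E4 =>
      ∑ i : Fin 4, |Q x * fderiv ℝ Q x (EuclideanSpace.single i 1)|) := by
    refine integrable_finset_sum _ fun i _ => ?_
    refine Integrable.mono' (hQsq.add (hDi i).integrable_sq)
      (hQsm.continuous.mul (hDcont i)).abs.aestronglyMeasurable
      (ae_of_all _ fun x => ?_)
    rw [Real.norm_eq_abs, abs_abs, abs_mul]
    simp only [Pi.add_apply]
    nlinarith [sq_nonneg (|Q x| - |fderiv ℝ Q x (EuclideanSpace.single i 1)|),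
      sq_abs (Q x), sq_abs (fderiv ℝ Q x (EuclideanSpace.single i 1)),
      abs_nonneg (Q x), abs_nonneg (fderiv ℝ Q x (EuclideanSpace.single i 1))]
  have hibp := ibp_eq Q hQsm hgrad hmix hQlapInt
  -- ∫ Q lap Q = ∫ UQ Q² - 1
  have hlapint_eq : (∫ x : E4, Q x * lapR Q x)
      = (∫ x : E4, UQ x * Q x ^ 2) - 1 := by
    have heq : (fun x : E4 => Q x * lapR Q x)
        = fun x => UQ x * Q x ^ 2 - Q x ^ 2 := funext fun x => by
      rw [hlap_eq x]; ring
    rw [heq, integral_sub hQIntU hQsq, hQnorm]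
  -- ∫ ‖∇Q‖² = ∫ ∑ (∂ᵢQ)²
  have hnormfd : (∫ x : E4, ‖fderiv ℝ Q x‖ ^ 2)
      = ∫ x : E4, ∑ i : Fin 4, (fderiv ℝ Q x (EuclideanSpace.single i 1)) ^ 2 := by
    congr 1
    exact funext fun x => norm_fderiv_sq (fderiv ℝ Q x)
  have hform := hRform Q hQd hQL2 hQH1 hRIntUQ
  rw [hQnorm] at hform
  -- strict positivity of ∫ (UQ - UR) Q²
  have hdiffInt : Integrable (fun x : E4 => (UQ x - UR x) * Q x ^ 2) := by
    have heq : (fun x : E4 => (UQ x - UR x) * Q x ^ 2)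
        = fun x => UQ x * Q x ^ 2 - UR x * Q x ^ 2 := funext fun x => by ring
    rw [heq]; exact hQIntU.sub hRIntUQ
  have hpos : 0 < ∫ x : E4, (UQ x - UR x) * Q x ^ 2 := by
    rw [integral_pos_iff_support_of_nonneg_ae ?_ hdiffInt]
    · -- measure of support positive
      have hsub : Metric.ball (EuclideanSpace.single (0 : Fin 4) (1:ℝ)) (1/2) ⊆
          Function.support fun x : E4 => (UQ x - UR x) * Q x ^ 2 := by
        intro x hx
        have hxne : x ≠ 0 := by
          intro h
          rw [Metric.mem_ball, h, dist_comm, dist_zero_right] at hx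
          norm_num [EuclideanSpace.norm_single] at hx
        have h1 : 0 < UQ x - UR x := sub_pos.mpr (hord x hxne)
        have h2 : 0 < Q x ^ 2 := pow_pos (hQpos x) 2
        exact ne_of_gt (mul_pos h1 h2)
      calc (0:ENNReal) < volume (Metric.ball (EuclideanSpace.single (0 : Fin 4) (1:ℝ)) (1/2)) :=
            Metric.measure_ball_pos _ _ (by norm_num)
        _ ≤ _ := measure_mono hsub
    · -- nonneg a.e.
      have hnull : volume ({(0 : E4)} : Set E4) = 0 := measure_singleton _
      filter_upwards [compl_mem_ae_iff.mpr hnull] with x hx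
      have hxne : x ≠ 0 := hx
      exact le_of_lt (mul_pos (sub_pos.mpr (hord x hxne)) (pow_pos (hQpos x) 2))
  have hsplit : (∫ x : E4, (UQ x - UR x) * Q x ^ 2)
      = (∫ x : E4, UQ x * Q x ^ 2) - ∫ x : E4, UR x * Q x ^ 2 := by
    have heq : (fun x : E4 => (UQ x - UR x) * Q x ^ 2)
        = fun x => UQ x * Q x ^ 2 - UR x * Q x ^ 2 := funext fun x => by ring
    rw [heq]; exact integral_sub hQIntU hRIntUQ
  rw [hsplit] at hpos
  rw [hnormfd] at hform
  linarith [hibp, hlapint_eq, hform, hpos]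
end
end

section
/- Let Q^{(t)} ∈ H¹(ℝ⁴) solve Q^{(t)} = (−Δ+1)^{-1}[(φ(t^{-k}|·|^k)|·|^{-2} ∗ |Q^{(t)}|²) Q^{(t)}] with ‖Q^{(t)}‖_{L^∞} ≲ 1 and potentials V^{(t)} satisfying |V^{(t)}(x)| ≲ (1+|x|²)^{-1} uniformly in t ≥ T₀. Then there exist δ > 0, C > 0 independent of t with |Q^{(t)}(x)| ≤ C e^{−δ|x|} for all x ∈ ℝ⁴ and t ≥ T₀. -/
open MeasureTheory
open RealInnerProductSpace

noncomputable section

/-- The modified Hartree potential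
`V^{(t)}(x) = ∫ φ(t^{-k}|x-y|^k) |x-y|^{-2} |Q^{(t)}(y)|² dy`. -/
def Vt (φ : ℝ → ℝ) (k : ℝ) (Q : ℝ → E4 → ℝ) (t : ℝ) (x : E4) : ℝ :=
  ∫ y : E4, φ (t ^ (-k) * ‖x - y‖ ^ k) * (Q t y) ^ 2 / ‖x - y‖ ^ 2

def sE (x : E4) : ℝ := Real.sqrt (1 + ‖x‖ ^ 2)

def wE (c : ℝ) (x : E4) : ℝ := Real.exp (c * sE x)

lemma one_add_sq_pos (x : E4) : 0 < 1 + ‖x‖ ^ 2 := by positivity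

lemma sE_one_le (x : E4) : 1 ≤ sE x := by
  have h1 : (1:ℝ) ≤ 1 + ‖x‖ ^ 2 := by nlinarith [sq_nonneg ‖x‖]
  exact Real.one_le_sqrt.mpr h1

lemma sE_pos (x : E4) : 0 < sE x := lt_of_lt_of_le one_pos (sE_one_le x)

lemma sE_sq (x : E4) : sE x ^ 2 = 1 + ‖x‖ ^ 2 := Real.sq_sqrt (one_add_sq_pos x).le

lemma norm_le_sE (x : E4) : ‖x‖ ≤ sE x := by
  have := Real.sqrt_le_sqrt (show ‖x‖^2 ≤ 1 + ‖x‖^2 by linarith)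
  simpa [sE, Real.sqrt_sq (norm_nonneg x)] using this

lemma hasFDerivAt_normsq (x : E4) :
    HasFDerivAt (fun y : E4 => ‖y‖ ^ 2) ((2:ℝ) • (innerSL ℝ x)) x := by
  have h := (hasFDerivAt_id x).inner ℝ (hasFDerivAt_id x)
  have heq : (fun y : E4 => ⟪id y, id y⟫) = fun y : E4 => ‖y‖ ^ 2 := by
    funext y; exact real_inner_self_eq_norm_sq y
  rw [heq] at h
  refine h.congr_fderiv ?_
  ext v
  simp only [ContinuousLinearMap.smul_apply, innerSL_apply_apply, ContinuousLinearMap.comp_apply,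
    ContinuousLinearMap.prod_apply, ContinuousLinearMap.id_apply, fderivInnerCLM_apply, id, smul_eq_mul]
  rw [real_inner_comm v x]
  ring

lemma hasFDerivAt_sE (x : E4) :
    HasFDerivAt sE ((sE x)⁻¹ • (innerSL ℝ x)) x := by
  have h1 : HasFDerivAt (fun y : E4 => 1 + ‖y‖ ^ 2) ((2:ℝ) • innerSL ℝ x) x :=
    (hasFDerivAt_normsq x).const_add 1
  have h2 : HasDerivAt Real.sqrt (1 / (2 * Real.sqrt (1 + ‖x‖ ^ 2))) (1 + ‖x‖ ^ 2) :=
    Real.hasDerivAt_sqrt (one_add_sq_pos x).ne'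
  have h3 := h2.comp_hasFDerivAt x h1
  refine h3.congr_fderiv ?_
  ext v
  simp only [ContinuousLinearMap.smul_apply, innerSL_apply_apply, smul_eq_mul, sE]
  field_simp

lemma hasFDerivAt_wE (c : ℝ) (x : E4) :
    HasFDerivAt (wE c) ((c * wE c x * (sE x)⁻¹) • innerSL ℝ x) x := by
  have h1 : HasDerivAt (fun u : ℝ => Real.exp (c * u)) (c * Real.exp (c * sE x)) (sE x) := by
    exact
      ((Real.hasDerivAt_exp (c * sE x)).comp (sE x) ((hasDerivAt_id (sE x)).const_mul c)).congr_deriv (by simp [mul_comm])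
  have h3 := h1.comp_hasFDerivAt x (hasFDerivAt_sE x)
  refine h3.congr_fderiv ?_
  ext v
  simp only [ContinuousLinearMap.smul_apply, innerSL_apply_apply, smul_eq_mul, wE]
  ring

lemma sum_coord_sq (x : E4) : ∑ i : Fin 4, (x i) ^ 2 = ‖x‖ ^ 2 := by
  have h := EuclideanSpace.norm_eq x
  rw [h, Real.sq_sqrt (by positivity)]
  congr 1; funext i; rw [Real.norm_eq_abs, sq_abs]

lemma fderiv_wE_apply (c : ℝ) (y : E4) (i : Fin 4) :
    fderiv ℝ (wE c) y (EuclideanSpace.single i 1) = c * wE c y * (sE y)⁻¹ * y i := by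
  rw [(hasFDerivAt_wE c y).fderiv]
  simp only [ContinuousLinearMap.smul_apply, innerSL_apply_apply, smul_eq_mul]
  rw [show ⟪y, EuclideanSpace.single i (1:ℝ)⟫ = y i by
    simpa using EuclideanSpace.inner_single_right (𝕜 := ℝ) i 1 y]


lemma lapR_wE_eq (c : ℝ) (x : E4) :
    lapR (wE c) x
      = wE c x * (c ^ 2 * ‖x‖ ^ 2 / sE x ^ 2 - c * ‖x‖ ^ 2 / sE x ^ 3 + 4 * c / sE x) := by
  have hs := sE_pos x
  have key : ∀ i : Fin 4,
      fderiv ℝ (fun y => fderiv ℝ (wE c) y (EuclideanSpace.single i 1)) x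
        (EuclideanSpace.single i 1)
      = wE c x * ((c ^ 2 / sE x ^ 2 - c / sE x ^ 3) * (x i) ^ 2 + c / sE x) := by
    intro i
    have hfun : (fun y => fderiv ℝ (wE c) y (EuclideanSpace.single i 1))
        = fun y => (c * wE c y * (sE y)⁻¹) * y i := by
      funext y; exact fderiv_wE_apply c y i
    rw [hfun]
    -- build HasFDerivAt of the product
    have hw := hasFDerivAt_wE c x
    have hcw : HasFDerivAt (fun y : E4 => c * wE c y)
        (c • ((c * wE c x * (sE x)⁻¹) • innerSL ℝ x)) x := hw.const_mul c
    have hinv : HasFDerivAt (fun y : E4 => (sE y)⁻¹)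
        ((-(sE x ^ 2)⁻¹) • ((sE x)⁻¹ • innerSL ℝ x)) x :=
      (hasDerivAt_inv hs.ne').comp_hasFDerivAt x (hasFDerivAt_sE x)
    have hA := hcw.mul hinv
    have hproj : HasFDerivAt (fun y : E4 => y i) (EuclideanSpace.proj (𝕜 := ℝ) i) x :=
      (EuclideanSpace.proj (𝕜 := ℝ) i).hasFDerivAt
    have hF : HasFDerivAt (fun y : E4 => c * wE c y * (sE y)⁻¹ * y i) _ x := hA.mul hproj
    rw [hF.fderiv]
    simp only [ContinuousLinearMap.add_apply, ContinuousLinearMap.smul_apply, Pi.mul_apply,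
      innerSL_apply_apply, smul_eq_mul, neg_mul, neg_smul,
      ContinuousLinearMap.neg_apply]
    rw [show ⟪x, EuclideanSpace.single i (1:ℝ)⟫ = x i by
      simpa using EuclideanSpace.inner_single_right (𝕜 := ℝ) i 1 x]
    have h1 : (EuclideanSpace.proj (𝕜 := ℝ) i) (EuclideanSpace.single i (1:ℝ)) = 1 := by
      simp [EuclideanSpace.proj, EuclideanSpace.single_apply]
    rw [h1]
    field_simp
    ring
  rw [lapR]
  rw [Finset.sum_congr rfl (fun i _ => key i)]
  rw [← Finset.mul_sum, Finset.sum_add_distrib, ← Finset.mul_sum, sum_coord_sq]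
  simp only [Finset.sum_const, Finset.card_univ, Fintype.card_fin, nsmul_eq_mul]
  field_simp
  ring

lemma lapR_wE_bound (c : ℝ) (hc : |c| ≤ 1/10) (x : E4) :
    lapR (wE c) x ≤ (3/5) * wE c x := by
  rw [lapR_wE_eq]
  have hs1 := sE_one_le x
  have hs := sE_pos x
  have hw : 0 < wE c x := Real.exp_pos _
  have hx2 : ‖x‖ ^ 2 = sE x ^ 2 - 1 := by have := sE_sq x; linarith
  rw [mul_comm]
  apply mul_le_mul_of_nonneg_right _ hw.le
  have habs : -(1/10) ≤ c ∧ c ≤ 1/10 := abs_le.mp hc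
  have h1 : c ^ 2 * ‖x‖ ^ 2 / sE x ^ 2 ≤ 1/100 := by
    rw [div_le_iff₀ (by positivity)]
    have : c ^ 2 ≤ 1/100 := by nlinarith [habs.1, habs.2]
    nlinarith [sq_nonneg ‖x‖, sq_nonneg (sE x)]
  have h2 : -(c * ‖x‖ ^ 2 / sE x ^ 3) ≤ 1/10 := by
    rw [neg_div' , div_le_iff₀ (by positivity)]
    have hb : ‖x‖^2 ≤ sE x ^ 2 := by linarith [sE_sq x, sq_nonneg ‖x‖]
    nlinarith [habs.1, habs.2, sq_nonneg ‖x‖, pow_pos hs 3, mul_pos hs (mul_pos hs hs)]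
  have h3 : 4 * c / sE x ≤ 4/10 := by
    rw [div_le_iff₀ hs]
    nlinarith [habs.2]
  linarith

lemma contDiff_sE : ContDiff ℝ 2 sE := by
  rw [contDiff_iff_contDiffAt]
  intro x
  exact (Real.contDiffAt_sqrt (one_add_sq_pos x).ne').comp x
    (contDiffAt_const.add (contDiff_norm_sq ℝ).contDiffAt)

lemma contDiff_wE (c : ℝ) : ContDiff ℝ 2 (wE c) :=
  Real.contDiff_exp.comp (contDiff_const.mul contDiff_sE)

lemma diff_fderiv_apply {f : E4 → ℝ} (hf : ContDiff ℝ 2 f) (e : E4) :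
    Differentiable ℝ (fun y => fderiv ℝ f y e) := by
  have h1 : ContDiff ℝ 1 (fderiv ℝ f) := hf.fderiv_right (le_refl 2)
  exact (h1.clm_apply contDiff_const).differentiable one_ne_zero

lemma fderiv_comb3 {f g h : E4 → ℝ} (hf : ContDiff ℝ 2 f) (hg : ContDiff ℝ 2 g)
    (hh : ContDiff ℝ 2 h) (a b c : ℝ) (y : E4) (e : E4) :
    fderiv ℝ (fun z => a * f z + b * g z + c * h z) y e
      = a * fderiv ℝ f y e + b * fderiv ℝ g y e + c * fderiv ℝ h y e := by
  have hf' := (hf.differentiable two_ne_zero y).hasFDerivAt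
  have hg' := (hg.differentiable two_ne_zero y).hasFDerivAt
  have hh' := (hh.differentiable two_ne_zero y).hasFDerivAt
  have H : HasFDerivAt (fun z => a * f z + b * g z + c * h z) _ y := ((hf'.const_mul a).add (hg'.const_mul b)).add (hh'.const_mul c)
  rw [H.fderiv]
  simp [ContinuousLinearMap.add_apply, ContinuousLinearMap.smul_apply, smul_eq_mul]

lemma lapR_comb3 {f g h : E4 → ℝ} (hf : ContDiff ℝ 2 f) (hg : ContDiff ℝ 2 g)
    (hh : ContDiff ℝ 2 h) (a b c : ℝ) (x : E4) :
    lapR (fun z => a * f z + b * g z + c * h z) x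
      = a * lapR f x + b * lapR g x + c * lapR h x := by
  rw [lapR, lapR, lapR, lapR, Finset.mul_sum, Finset.mul_sum, Finset.mul_sum,
    ← Finset.sum_add_distrib, ← Finset.sum_add_distrib]
  apply Finset.sum_congr rfl
  intro i _
  set e := EuclideanSpace.single i (1:ℝ) with he
  have hfun : (fun y => fderiv ℝ (fun z => a * f z + b * g z + c * h z) y e)
      = fun y => a * fderiv ℝ f y e + b * fderiv ℝ g y e + c * fderiv ℝ h y e := by
    funext y; exact fderiv_comb3 hf hg hh a b c y e
  rw [hfun]
  have df := (diff_fderiv_apply hf e x).hasFDerivAt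
  have dg := (diff_fderiv_apply hg e x).hasFDerivAt
  have dh := (diff_fderiv_apply hh e x).hasFDerivAt
  have H : HasFDerivAt (fun y => a * fderiv ℝ f y e + b * fderiv ℝ g y e + c * fderiv ℝ h y e) _ x := ((df.const_mul a).add (dg.const_mul b)).add (dh.const_mul c)
  rw [H.fderiv]
  simp [ContinuousLinearMap.add_apply, ContinuousLinearMap.smul_apply, smul_eq_mul]

lemma second_deriv_nonpos_at_max {g g' : ℝ → ℝ} {d : ℝ}
    (hg : ∀ σ : ℝ, HasDerivAt g (g' σ) σ) (hg' : HasDerivAt g' d 0)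
    (hmax : ∀ σ : ℝ, g σ ≤ g 0) : d ≤ 0 := by
  have hmax0 : IsLocalMax g 0 := Filter.Eventually.of_forall hmax
  have hg0 : g' 0 = 0 := hmax0.hasDerivAt_eq_zero (hg 0)
  -- for each n, find cₙ ∈ (0, 1/(n+1)) with g' cₙ ≤ 0
  have hex : ∀ n : ℕ, ∃ cn : ℝ, 0 < cn ∧ cn < 1 / (n + 1) ∧ g' cn ≤ 0 := by
    intro n
    have hab : (0:ℝ) < 1 / (n + 1) := by positivity
    have hcont : ContinuousOn g (Set.Icc 0 (1 / (n + 1))) :=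
      (fun σ _ => ((hg σ).differentiableAt.continuousAt).continuousWithinAt)
    obtain ⟨cn, hcn, hslope⟩ := exists_hasDerivAt_eq_slope g g' hab hcont
      (fun σ _ => hg σ)
    refine ⟨cn, hcn.1, hcn.2, ?_⟩
    rw [hslope]
    apply div_nonpos_of_nonpos_of_nonneg
    · linarith [hmax (1 / (n + 1))]
    · linarith
  choose cs hcs1 hcs2 hcs3 using hex
  have hto : Filter.Tendsto cs Filter.atTop (nhdsWithin 0 {x : ℝ | x ≠ 0}) := by
    rw [tendsto_nhdsWithin_iff]
    constructor
    · apply squeeze_zero (fun n => (hcs1 n).le) (fun n => (hcs2 n).le)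
      exact tendsto_one_div_add_atTop_nhds_zero_nat
    · exact Filter.Eventually.of_forall (fun n => (hcs1 n).ne')
  have hslopelim : Filter.Tendsto (fun n => slope g' 0 (cs n)) Filter.atTop (nhds d) :=
    (hasDerivAt_iff_tendsto_slope.mp hg').comp hto
  refine le_of_tendsto hslopelim (Filter.Eventually.of_forall fun n => ?_)
  rw [slope_def_field]
  rw [hg0]
  apply div_nonpos_of_nonpos_of_nonneg
  · simpa using hcs3 n
  · simpa using (hcs1 n).le

lemma lapR_nonpos_at_max {f : E4 → ℝ} (hf : ContDiff ℝ 2 f) {x₀ : E4}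
    (hmax : ∀ y : E4, f y ≤ f x₀) : lapR f x₀ ≤ 0 := by
  apply Finset.sum_nonpos
  intro i _
  set e := EuclideanSpace.single i (1:ℝ) with he
  set ℓ : ℝ → E4 := fun σ => x₀ + σ • e with hℓdef
  have hℓ0 : ℓ 0 = x₀ := by simp [hℓdef]
  have hℓ : ∀ σ : ℝ, HasDerivAt ℓ e σ := by
    intro σ
    exact (((hasDerivAt_id σ).smul_const e).const_add x₀).congr_deriv (one_smul _ _)
  have hgd : ∀ σ : ℝ, HasDerivAt (fun τ => f (ℓ τ)) (fderiv ℝ f (ℓ σ) e) σ := fun σ =>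
    ((hf.differentiable two_ne_zero (ℓ σ)).hasFDerivAt).comp_hasDerivAt σ (hℓ σ)
  set G : E4 → ℝ := fun y => fderiv ℝ f y e with hGdef
  have hG : Differentiable ℝ G := diff_fderiv_apply hf e
  have hg' : HasDerivAt (fun σ => G (ℓ σ)) (fderiv ℝ G x₀ e) 0 := by
    have h1 : HasFDerivAt G (fderiv ℝ G (ℓ 0)) (ℓ 0) := (hG (ℓ 0)).hasFDerivAt
    have := h1.comp_hasDerivAt 0 (hℓ 0)
    rw [hℓ0] at this
    exact this
  have hmax1 : ∀ σ : ℝ, f (ℓ σ) ≤ f (ℓ 0) := by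
    intro σ; rw [hℓ0]; exact hmax (ℓ σ)
  exact second_deriv_nonpos_at_max hgd hg' hmax1

/-- Uniform exponential decay (Slaggie–Wichmann): if the family `Q^{(t)}` solves
`-ΔQ^{(t)} + Q^{(t)} = V^{(t)} Q^{(t)}` with uniformly bounded sup-norms and
uniformly decaying potentials `|V^{(t)}(x)| ≲ (1+|x|²)⁻¹`, then
`|Q^{(t)}(x)| ≤ C e^{-δ|x|}` uniformly in `t ≥ T₀`. -/
theorem Qt_uniform_exponential_decay
    (k : ℝ) (hk : 0 < k) (T₀ : ℝ) (hT₀ : 0 < T₀)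
    (φ : ℝ → ℝ) (Cφ : ℝ) (hφ : ∀ r : ℝ, |φ r| ≤ Cφ)
    (Q : ℝ → E4 → ℝ)
    (hsm : ∀ t : ℝ, T₀ ≤ t → ContDiff ℝ 2 (Q t))
    (heq : ∀ t : ℝ, T₀ ≤ t → ∀ x : E4,
      -lapR (Q t) x + Q t x = Vt φ k Q t x * Q t x)
    (M : ℝ)
    (hsup : ∀ t : ℝ, T₀ ≤ t → ∀ x : E4, |Q t x| ≤ M)
    (hL2 : ∀ t : ℝ, T₀ ≤ t → MemLp (Q t) 2 (volume : Measure E4))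
    (CV : ℝ)
    (hVdec : ∀ t : ℝ, T₀ ≤ t → ∀ x : E4,
      |Vt φ k Q t x| ≤ CV / (1 + ‖x‖ ^ 2)) :
    ∃ δ : ℝ, 0 < δ ∧ ∃ C : ℝ, 0 < C ∧ ∀ t : ℝ, T₀ ≤ t → ∀ x : E4,
      |Q t x| ≤ C * Real.exp (-δ * ‖x‖) := by
  refine ⟨1/10, by norm_num, ?_⟩
  set R : ℝ := Real.sqrt (4 * |CV|) with hRdef
  have hR0 : 0 ≤ R := Real.sqrt_nonneg _
  set C : ℝ := (M + 1) * Real.exp ((1 + R) / 10) with hCdef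
  have hM0 : 0 ≤ M := le_trans (abs_nonneg _) (hsup T₀ le_rfl 0)
  have hC0 : 0 < C := by positivity
  refine ⟨C, hC0, ?_⟩
  intro t ht x
  have hQc : ContDiff ℝ 2 (Q t) := hsm t ht
  -- main comparison claim
  have main : ∀ σ : ℝ, σ = 1 ∨ σ = -1 → ∀ ε : ℝ, 0 < ε → ∀ z : E4,
      σ * Q t z ≤ C * wE (-(1/10)) z + ε * wE (1/10) z := by
    intro σ hσ ε hε
    by_contra hcon
    push_neg at hcon
    obtain ⟨x₁, hx₁⟩ := hcon
    obtain ⟨v, hvdef⟩ : ∃ v : E4 → ℝ,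
        v = fun z => σ * Q t z + -C * wE (-(1/10)) z + -ε * wE (1/10) z := ⟨_, rfl⟩
    have hvz : ∀ z : E4, v z = σ * Q t z + -C * wE (-(1/10)) z + -ε * wE (1/10) z :=
      fun z => by rw [hvdef]
    have hwpos : ∀ (c : ℝ) (z : E4), 0 < wE c z := fun c z => Real.exp_pos _
    have hvx₁ : 0 < v x₁ := by rw [hvz]; linarith
    have hσQ : ∀ z : E4, σ * Q t z ≤ M := by
      intro z
      rcases hσ with h | h <;> subst h
      · simpa using le_trans (le_abs_self _) (hsup t ht z)
      · have h := (neg_le_abs (Q t z)).trans (hsup t ht z)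
        linarith
    have hvbound : ∀ z : E4, v z ≤ M - ε * wE (1/10) z := by
      intro z
      have h1 : 0 < C * wE (-(1/10)) z := mul_pos hC0 (hwpos _ _)
      rw [hvz]
      linarith [hσQ z]
    have hvcont : Continuous v := by
      rw [hvdef]
      exact ((continuous_const.mul hQc.continuous).add
        (continuous_const.mul (contDiff_wE _).continuous)).add
        (continuous_const.mul (contDiff_wE _).continuous)
    have hMv : 0 < M - v x₁ := by
      have h1 : 0 < ε * wE (1/10) x₁ := mul_pos hε (hwpos _ _)
      linarith [hvbound x₁]
    set B : ℝ := (M - v x₁) / ε with hB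
    have hB0 : 0 < B := by positivity
    have hS_closed : IsClosed {z : E4 | v x₁ ≤ v z} := isClosed_le continuous_const hvcont
    have hS_sub : {z : E4 | v x₁ ≤ v z} ⊆ Metric.closedBall (0 : E4) (10 * Real.log B) := by
      intro z hz
      have hz' : v x₁ ≤ v z := hz
      rw [Metric.mem_closedBall, dist_zero_right]
      have h1 : ε * wE (1/10) z ≤ M - v x₁ := by linarith [hvbound z]
      have h2 : wE (1/10) z ≤ B := by
        rw [hB, le_div_iff₀ hε]
        linarith [mul_comm ε (wE (1/10) z)]
      have h3 : (1/10) * sE z ≤ Real.log B := by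
        rw [Real.le_log_iff_exp_le hB0]
        exact h2
      linarith [norm_le_sE z, sE_pos z]
    have hS_cpt : IsCompact {z : E4 | v x₁ ≤ v z} :=
      (Metric.isBounded_closedBall.subset hS_sub).isCompact_closure.of_isClosed_subset
        hS_closed subset_closure
    obtain ⟨x₀, hx₀S, hx₀max⟩ := hS_cpt.exists_isMaxOn
      ⟨x₁, show v x₁ ≤ v x₁ from le_rfl⟩ hvcont.continuousOn
    have hx₀S' : v x₁ ≤ v x₀ := hx₀S
    have hglobal : ∀ z : E4, v z ≤ v x₀ := by
      intro z
      by_cases hzS : z ∈ {z : E4 | v x₁ ≤ v z}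
      · exact hx₀max hzS
      · exact (lt_of_not_ge hzS).le.trans hx₀S'
    have hvx₀ : 0 < v x₀ := lt_of_lt_of_le hvx₁ hx₀S'
    have hQx₀ : C * wE (-(1/10)) x₀ + ε * wE (1/10) x₀ < σ * Q t x₀ := by
      rw [hvz] at hvx₀; linarith
    -- sE x₀ is large, so the potential is small there
    have hsgt : 1 + R < sE x₀ := by
      have h1 : C * wE (-(1/10)) x₀ < M + 1 := by
        have h2 : 0 < ε * wE (1/10) x₀ := mul_pos hε (hwpos _ _)
        linarith [hσQ x₀]
      have h2 : Real.exp ((1 + R) / 10) * Real.exp (-(1/10) * sE x₀) < 1 := by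
        rw [hCdef] at h1
        have hM1 : (0:ℝ) < M + 1 := by linarith
        have h5 : (M+1) * (Real.exp ((1+R)/10) * Real.exp (-(1/10) * sE x₀)) < (M+1) * 1 := by
          rw [mul_one]
          calc (M+1) * (Real.exp ((1+R)/10) * Real.exp (-(1/10) * sE x₀))
              = (M + 1) * Real.exp ((1 + R) / 10) * wE (-(1/10)) x₀ := by rw [wE]; ring
            _ < M + 1 := h1
        exact lt_of_mul_lt_mul_left h5 hM1.le
      rw [← Real.exp_add] at h2
      have h3 : (1 + R) / 10 + -(1/10) * sE x₀ < 0 := by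
        by_contra hge
        push_neg at hge
        have := Real.one_le_exp hge
        linarith
      linarith
    have hVx₀ : |Vt φ k Q t x₀| ≤ 1/4 := by
      have h1 := hVdec t ht x₀
      have h4CV : 4 * CV ≤ 1 + ‖x₀‖ ^ 2 := by
        have hs2 : (1 + R) ^ 2 ≤ sE x₀ ^ 2 :=
          pow_le_pow_left₀ (by linarith) hsgt.le 2
        have hsq : R ^ 2 = 4 * |CV| := Real.sq_sqrt (by positivity)
        have hse := sE_sq x₀
        nlinarith [le_abs_self CV, hR0]
      have hpos : (0:ℝ) < 1 + ‖x₀‖ ^ 2 := by positivity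
      refine le_trans h1 ?_
      rw [div_le_iff₀ hpos]
      linarith
    -- Laplacian identities and bounds at x₀
    have hlapQ : lapR (Q t) x₀ = Q t x₀ - Vt φ k Q t x₀ * Q t x₀ := by
      have := heq t ht x₀; linarith
    have hvC2 : ContDiff ℝ 2 v := by
      rw [hvdef]
      exact ((contDiff_const.mul hQc).add (contDiff_const.mul (contDiff_wE _))).add
        (contDiff_const.mul (contDiff_wE _))
    have hlapv : lapR v x₀ = σ * lapR (Q t) x₀ + -C * lapR (wE (-(1/10))) x₀
        + -ε * lapR (wE (1/10)) x₀ := by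
      rw [hvdef]
      exact lapR_comb3 hQc (contDiff_wE _) (contDiff_wE _) σ (-C) (-ε) x₀
    have hneg : lapR v x₀ ≤ 0 := lapR_nonpos_at_max hvC2 hglobal
    have habs10 : |(-(1/10) : ℝ)| ≤ 1/10 := by rw [abs_neg, abs_of_pos] <;> norm_num
    have habs10' : |(1/10 : ℝ)| ≤ 1/10 := by rw [abs_of_pos] <;> norm_num
    have hw1 : lapR (wE (-(1/10))) x₀ ≤ (3/5) * wE (-(1/10)) x₀ := lapR_wE_bound _ habs10 x₀
    have hw2 : lapR (wE (1/10)) x₀ ≤ (3/5) * wE (1/10) x₀ := lapR_wE_bound _ habs10' x₀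
    have hp1 : 0 < C * wE (-(1/10)) x₀ := mul_pos hC0 (hwpos _ _)
    have hp2 : 0 < ε * wE (1/10) x₀ := mul_pos hε (hwpos _ _)
    have hQpos : 0 < σ * Q t x₀ :=
      lt_trans (by linarith : (0:ℝ) < C * wE (-(1/10)) x₀ + ε * wE (1/10) x₀) hQx₀
    have h34 : (3/4) * (σ * Q t x₀) ≤ σ * lapR (Q t) x₀ := by
      have heq2 : σ * lapR (Q t) x₀ = (1 - Vt φ k Q t x₀) * (σ * Q t x₀) := by
        rw [hlapQ]; ring
      rw [heq2]
      have h14 := abs_le.mp hVx₀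
      exact mul_le_mul_of_nonneg_right (by linarith) hQpos.le
    have hmul1 : C * lapR (wE (-(1/10))) x₀ ≤ (3/5) * (C * wE (-(1/10)) x₀) := by
      have := mul_le_mul_of_nonneg_left hw1 hC0.le
      linarith [this, mul_left_comm C (3/5 : ℝ) (wE (-(1/10)) x₀)]
    have hmul2 : ε * lapR (wE (1/10)) x₀ ≤ (3/5) * (ε * wE (1/10) x₀) := by
      have := mul_le_mul_of_nonneg_left hw2 hε.le
      linarith [this, mul_left_comm ε (3/5 : ℝ) (wE (1/10) x₀)]
    linarith [hneg, hlapv, h34, hmul1, hmul2, hQx₀, hp1, hp2]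
  -- pass to the limit ε → 0
  have h2 : ∀ σ : ℝ, σ = 1 ∨ σ = -1 → σ * Q t x ≤ C * wE (-(1/10)) x := by
    intro σ hσ
    by_contra hlt
    push_neg at hlt
    have hwp : 0 < wE (1/10) x := Real.exp_pos _
    set d : ℝ := σ * Q t x - C * wE (-(1/10)) x with hd
    have hd0 : 0 < d := by rw [hd]; linarith
    have h2w : (0:ℝ) < 2 * wE (1/10) x := by linarith
    have hmain := main σ hσ (d / (2 * wE (1/10) x)) (div_pos hd0 h2w) x
    have hev : d / (2 * wE (1/10) x) * wE (1/10) x = d / 2 := by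
      field_simp
    rw [hev, hd] at hmain
    linarith
  have hQle := h2 1 (Or.inl rfl)
  have hQge := h2 (-1) (Or.inr rfl)
  rw [one_mul] at hQle
  have habs : |Q t x| ≤ C * wE (-(1/10)) x := abs_le.mpr ⟨by linarith, hQle⟩
  refine le_trans habs ?_
  apply mul_le_mul_of_nonneg_left _ hC0.le
  rw [wE]
  apply Real.exp_le_exp.mpr
  have := norm_le_sE x
  linarith

end
end
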